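/- (Lemma 4.1, first essential inequality) The isoperimetric constants at infinity satisfy α_ess(G)/2 ≤ α_d^ess(V), i.e. α_ess(G) ≤ 2·α_d^ess(V), as an inequality in [0,∞]. -/

import Mathlib

open scoped Classical ENNReal
open MeasureTheory

noncomputable section

/-- A real function on `[0, L]` which is continuous and piecewise continuously
differentiable: there is a finite partition `0 = x 0 < x 1 < ... < x n = L` such that
on each closed piece the function has a continuous derivative. -/
def PiecewiseC1 (f : ℝ → ℝ) (L : ℝ) : Prop :=
  ContinuousOn f (Set.Icc 0 L) ∧
  ∃ (n : ℕ) (x : Fin (n + 1) → ℝ), x 0 = 0 ∧ x (Fin.last n) = L ∧ StrictMono x ∧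
    ∀ i : Fin n, ∃ g : ℝ → ℝ,
      ContinuousOn g (Set.Icc (x i.castSucc) (x i.succ)) ∧
      ∀ t ∈ Set.Icc (x i.castSucc) (x i.succ),
        HasDerivWithinAt f (g t) (Set.Icc (x i.castSucc) (x i.succ)) t

/-- The underlying (unoriented) simple graph of a set of edges `E` with endpoint
map `ends : E → V × V`. -/
def graphOf {V E : Type} (ends : E → V × V) : SimpleGraph V :=
  SimpleGraph.fromRel fun u v => ∃ e, ends e = (u, v)

/-- A metric graph: a connected, locally finite, simple combinatorial graph with
countably infinite vertex and edge sets, each edge having a finite positive length.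
Each edge carries an (auxiliary) orientation given by `ends`. -/
structure MetricGraph : Type 1 where
  V : Type
  E : Type
  countV : Countable V
  infV : Infinite V
  countE : Countable E
  infE : Infinite E
  ends : E → V × V
  len : E → ℝ
  len_pos : ∀ e, 0 < len e
  no_loops : ∀ e, (ends e).1 ≠ (ends e).2
  no_multi : Function.Injective fun e => Sym2.mk (ends e)
  locfin : ∀ v, {e | (ends e).1 = v ∨ (ends e).2 = v}.Finite
  conn : (graphOf ends).Connected

namespace MetricGraph

/-- The underlying simple graph. -/
def graph (Γ : MetricGraph) : SimpleGraph Γ.V := graphOf Γ.ends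

/-- The star of a vertex: the set of edges incident to it. -/
def star (Γ : MetricGraph) (v : Γ.V) : Set Γ.E :=
  {e | (Γ.ends e).1 = v ∨ (Γ.ends e).2 = v}

/-- Combinatorial degree of a vertex. -/
def degree (Γ : MetricGraph) (v : Γ.V) : ℕ := (Γ.locfin v).toFinset.card

/-- The vertices of a (finite) subgraph given by a finite set of edges. -/
def vertsOf (Γ : MetricGraph) (F : Finset Γ.E) : Finset Γ.V :=
  F.image (fun e => (Γ.ends e).1) ∪ F.image fun e => (Γ.ends e).2

/-- The degree of a vertex inside the subgraph given by the edge set `F`. -/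
def degIn (Γ : MetricGraph) (F : Finset Γ.E) (v : Γ.V) : ℕ :=
  (F.filter fun e => (Γ.ends e).1 = v ∨ (Γ.ends e).2 = v).card

/-- Connectedness of the subgraph spanned by the edge set `F`. -/
def SubConn (Γ : MetricGraph) (F : Finset Γ.E) : Prop :=
  ((SimpleGraph.fromRel fun u v => ∃ e ∈ F, Γ.ends e = (u, v)).induce
    (↑(Γ.vertsOf F) : Set Γ.V)).Connected

/-- A finite connected subgraph (with at least one edge), given by its edge set. -/
def IsFinSubgraph (Γ : MetricGraph) (F : Finset Γ.E) : Prop :=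
  F.Nonempty ∧ Γ.SubConn F

/-- The boundary of a finite subgraph with respect to `Γ`: the vertices whose degree
in the subgraph is strictly smaller than the degree in `Γ`. -/
def bdry (Γ : MetricGraph) (F : Finset Γ.E) : Finset Γ.V :=
  (Γ.vertsOf F).filter fun v => Γ.degIn F v < Γ.degree v

/-- `deg (∂_G G̃)`. -/
def degBdry (Γ : MetricGraph) (F : Finset Γ.E) : ℝ :=
  ∑ v ∈ Γ.bdry F, (Γ.degIn F v : ℝ)

/-- The total length (Lebesgue measure) of a finite subgraph. -/
def mes (Γ : MetricGraph) (F : Finset Γ.E) : ℝ := ∑ e ∈ F, Γ.len e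

/-- The isoperimetric (Cheeger) constant of a metric graph. -/
def alpha (Γ : MetricGraph) : ℝ :=
  sInf {r : ℝ | ∃ F : Finset Γ.E, Γ.IsFinSubgraph F ∧ r = Γ.degBdry F / Γ.mes F}

/-- The isoperimetric constant at infinity, as an element of `[0,∞]`. -/
def alphaEssEnn (Γ : MetricGraph) : ℝ≥0∞ :=
  ⨆ W : Finset Γ.E, ⨅ (F : Finset Γ.E) (_ : Γ.IsFinSubgraph F ∧ Disjoint F W),
    ENNReal.ofReal (Γ.degBdry F / Γ.mes F)

/-- The vertex weight `m(v) = Σ_{e ∈ E_v} |e|`. -/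
def mweight (Γ : MetricGraph) (v : Γ.V) : ℝ :=
  ∑ e ∈ (Γ.locfin v).toFinset, Γ.len e

/-- The set of boundary edges of a vertex set: edges with exactly one endpoint in `X`. -/
def Eb (Γ : MetricGraph) (X : Set Γ.V) : Set Γ.E :=
  {e | Xor' ((Γ.ends e).1 ∈ X) ((Γ.ends e).2 ∈ X)}

/-- The discrete isoperimetric constant of a vertex set `U`. -/
def alphaD (Γ : MetricGraph) (U : Set Γ.V) : ℝ :=
  sInf {r : ℝ | ∃ X : Finset Γ.V, ↑X ⊆ U ∧ X.Nonempty ∧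
    r = ((Γ.Eb ↑X).ncard : ℝ) / ∑ v ∈ X, Γ.mweight v}

/-- The discrete isoperimetric constant at infinity, as an element of `[0,∞]`. -/
def alphaDEssEnn (Γ : MetricGraph) : ℝ≥0∞ :=
  ⨆ X : Finset Γ.V, ENNReal.ofReal (Γ.alphaD (↑X : Set Γ.V)ᶜ)

/-- The combinatorial isoperimetric constant. -/
def alphaComb (Γ : MetricGraph) : ℝ :=
  sInf {r : ℝ | ∃ X : Finset Γ.V, X.Nonempty ∧
    r = ((Γ.Eb ↑X).ncard : ℝ) / ∑ v ∈ X, (Γ.degree v : ℝ)}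

/-- `ℓ*(G) = sup of edge lengths`. -/
def ellSup (Γ : MetricGraph) : ℝ := sSup (Set.range Γ.len)

/-- `ℓ_*(G) = inf of edge lengths`. -/
def ellInf (Γ : MetricGraph) : ℝ := sInf (Set.range Γ.len)

/-- `ℓ*(G)` as an element of `[0,∞]`. -/
def ellSupEnn (Γ : MetricGraph) : ℝ≥0∞ := ⨆ e : Γ.E, ENNReal.ofReal (Γ.len e)

/-- `ℓ*_ess(G) = inf_F sup_{e ∉ F} |e|` as an element of `[0,∞]`. -/
def ellSupEssEnn (Γ : MetricGraph) : ℝ≥0∞ :=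
  ⨅ W : Finset Γ.E, ⨆ e : {e : Γ.E // e ∉ W}, ENNReal.ofReal (Γ.len (e : Γ.E))

/-- Outgoing edges at a vertex (for the fixed orientation). -/
def plusE (Γ : MetricGraph) (v : Γ.V) : Set Γ.E := {e | (Γ.ends e).1 = v}

/-- Incoming edges at a vertex (for the fixed orientation). -/
def minusE (Γ : MetricGraph) (v : Γ.V) : Set Γ.E := {e | (Γ.ends e).2 = v}

/-- The curvature `K(v) = ((#E_v⁺ − #E_v⁻)/#E_v⁺) · inf_{e ∈ E_v⁺} 1/|e|`. -/
def Kcurv (Γ : MetricGraph) (v : Γ.V) : ℝ :=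
  (((Γ.plusE v).ncard : ℝ) - ((Γ.minusE v).ncard : ℝ)) / ((Γ.plusE v).ncard : ℝ) *
    sInf ((fun e => 1 / Γ.len e) '' Γ.plusE v)

/-- The combinatorial curvature `K_comb(v) = 1 − #E_v⁻/#E_v⁺`. -/
def Kcomb (Γ : MetricGraph) (v : Γ.V) : ℝ :=
  1 - ((Γ.minusE v).ncard : ℝ) / ((Γ.plusE v).ncard : ℝ)

/-- `liminf_{v ∈ V} K(v) = sup over finite W of inf_{v ∉ W} K(v)`, in `[0,∞]`. -/
def KcurvEssEnn (Γ : MetricGraph) : ℝ≥0∞ :=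
  ⨆ W : Finset Γ.V, ⨅ v : {v : Γ.V // v ∉ W}, ENNReal.ofReal (Γ.Kcurv (v : Γ.V))

/-- `liminf_{v ∈ V} K_comb(v) = sup over finite W of inf_{v ∉ W} K_comb(v)`. -/
def KcombLiminf (Γ : MetricGraph) : ℝ :=
  sSup (Set.range fun W : Finset Γ.V => sInf (Γ.Kcomb '' (↑W : Set Γ.V)ᶜ))

/-- The value of an edgewise function at an endpoint of an edge. -/
def endVal (Γ : MetricGraph) (f : Γ.E → ℝ → ℝ) (e : Γ.E) (v : Γ.V) : ℝ :=
  if (Γ.ends e).1 = v then f e 0 else f e (Γ.len e)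

/-- A test function on the metric graph `Γ`: a family of continuous, piecewise `C¹`
functions on the edges, matching at the vertices, vanishing on all but finitely
many edges. -/
structure TestFun (Γ : MetricGraph) where
  f : Γ.E → ℝ → ℝ
  piecewise : ∀ e, PiecewiseC1 (f e) (Γ.len e)
  vertexCont : ∀ e e' : Γ.E, ∀ v : Γ.V, e ∈ Γ.star v → e' ∈ Γ.star v →
    Γ.endVal f e v = Γ.endVal f e' v
  finSupp : {e : Γ.E | ∃ x ∈ Set.Icc 0 (Γ.len e), f e x ≠ 0}.Finite

/-- `‖f‖² = Σ_e ∫₀^{|e|} f_e(x)² dx`. -/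
def TestFun.normSq {Γ : MetricGraph} (φ : TestFun Γ) : ℝ :=
  ∑ᶠ e : Γ.E, ∫ x in (0:ℝ)..Γ.len e, (φ.f e x) ^ 2

/-- `‖f′‖² = Σ_e ∫₀^{|e|} f_e′(x)² dx`. -/
def TestFun.energySq {Γ : MetricGraph} (φ : TestFun Γ) : ℝ :=
  ∑ᶠ e : Γ.E, ∫ x in (0:ℝ)..Γ.len e, (deriv (φ.f e) x) ^ 2

/-- A test function is nonzero if it does not vanish identically on the graph. -/
def TestFun.Nonzero {Γ : MetricGraph} (φ : TestFun Γ) : Prop :=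
  ∃ e : Γ.E, ∃ x ∈ Set.Icc 0 (Γ.len e), φ.f e x ≠ 0

/-- The bottom of the spectrum of the Kirchhoff Laplacian, via the variational
(Rayleigh quotient) characterization. -/
def lambda0 (Γ : MetricGraph) : ℝ :=
  sInf {r : ℝ | ∃ φ : TestFun Γ, φ.Nonzero ∧ r = φ.energySq / φ.normSq}

end MetricGraph

/-- A weighted graph `(V, m, b)`: a connected, locally finite, simple combinatorial
graph with countably infinite vertex and edge sets, an edge weight `b` and a vertex
weight `m`. -/
structure WeightedGraph : Type 1 where
  V : Type
  E : Type
  countV : Countable V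
  infV : Infinite V
  countE : Countable E
  infE : Infinite E
  ends : E → V × V
  no_loops : ∀ e, (ends e).1 ≠ (ends e).2
  no_multi : Function.Injective fun e => Sym2.mk (ends e)
  locfin : ∀ v, {e | (ends e).1 = v ∨ (ends e).2 = v}.Finite
  conn : (graphOf ends).Connected
  b : E → ℝ
  b_pos : ∀ e, 0 < b e
  m : V → ℝ
  m_pos : ∀ v, 0 < m v

namespace WeightedGraph

/-- An edge weight `d` is intrinsic if `Σ_{e ∈ E_v} d(e)² b(e) ≤ m(v)` for all `v`. -/
def Intrinsic (Γ : WeightedGraph) (d : Γ.E → ℝ) : Prop :=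
  ∀ v, ∑ e ∈ (Γ.locfin v).toFinset, d e ^ 2 * Γ.b e ≤ Γ.m v

/-- The boundary edges of a vertex set: edges with exactly one endpoint in `X`. -/
def Eb (Γ : WeightedGraph) (X : Set Γ.V) : Set Γ.E :=
  {e | Xor' ((Γ.ends e).1 ∈ X) ((Γ.ends e).2 ∈ X)}

/-- The discrete isoperimetric constant `α_d(U)` with respect to the weight `d`. -/
def alphaD (Γ : WeightedGraph) (d : Γ.E → ℝ) (U : Set Γ.V) : ℝ :=
  sInf {r : ℝ | ∃ X : Finset Γ.V, ↑X ⊆ U ∧ X.Nonempty ∧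
    r = (∑ᶠ e ∈ Γ.Eb ↑X, d e * Γ.b e) / ∑ v ∈ X, Γ.m v}

/-- The discrete isoperimetric constant at infinity, in `[0,∞]`. -/
def alphaDEssEnn (Γ : WeightedGraph) (d : Γ.E → ℝ) : ℝ≥0∞ :=
  ⨆ X : Finset Γ.V, ENNReal.ofReal (Γ.alphaD d (↑X : Set Γ.V)ᶜ)

/-- The energy form `Q(u) = Σ_e b(e) (u(e_i) − u(e_0))²`. -/
def Q (Γ : WeightedGraph) (u : Γ.V → ℝ) : ℝ :=
  ∑ᶠ e : Γ.E, Γ.b e * (u (Γ.ends e).2 - u (Γ.ends e).1) ^ 2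

/-- The squared norm `Σ_v m(v) u(v)²`. -/
def normSqD (Γ : WeightedGraph) (u : Γ.V → ℝ) : ℝ :=
  ∑ᶠ v : Γ.V, Γ.m v * u v ^ 2

/-- The bottom of the spectrum of the Friedrichs extension of the weighted Laplacian,
via the variational characterization over finitely supported functions. -/
def lambda0 (Γ : WeightedGraph) : ℝ :=
  sInf {r : ℝ | ∃ u : Γ.V → ℝ, (Function.support u).Finite ∧ u ≠ 0 ∧
    r = Γ.Q u / Γ.normSqD u}

/-- The bottom of the essential spectrum of the Friedrichs extension, via Glazman's
decomposition principle, in `[0,∞]`. -/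
def lambda0EssEnn (Γ : WeightedGraph) : ℝ≥0∞ :=
  ⨆ X : Finset Γ.V, ⨅ (u : Γ.V → ℝ)
    (_ : (Function.support u).Finite ∧ u ≠ 0 ∧ ∀ v ∈ X, u v = 0),
      ENNReal.ofReal (Γ.Q u / Γ.normSqD u)

end WeightedGraph

end

noncomputable section Aux

namespace MetricGraph
variable (Γ : MetricGraph)

/-- The star of a vertex, as a finset. -/
def starF (v : Γ.V) : Finset Γ.E := (Γ.locfin v).toFinset

lemma mem_starF {v : Γ.V} {e : Γ.E} :
    e ∈ Γ.starF v ↔ (Γ.ends e).1 = v ∨ (Γ.ends e).2 = v := by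
  simp [starF]

/-- All edges incident to a finite vertex set. -/
def incEdges (X : Finset Γ.V) : Finset Γ.E := X.biUnion fun v => Γ.starF v

lemma mem_incEdges {X : Finset Γ.V} {e : Γ.E} :
    e ∈ Γ.incEdges X ↔ (Γ.ends e).1 ∈ X ∨ (Γ.ends e).2 ∈ X := by
  simp only [incEdges, Finset.mem_biUnion, mem_starF]
  constructor
  · rintro ⟨v, hv, h | h⟩ <;> (subst h; tauto)
  · rintro (h | h)
    exacts [⟨_, h, Or.inl rfl⟩, ⟨_, h, Or.inr rfl⟩]

/-- The boundary edges of a finite vertex set, as a finset. -/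
def ebFinset (X : Finset Γ.V) : Finset Γ.E :=
  (Γ.incEdges X).filter fun e => Xor' ((Γ.ends e).1 ∈ X) ((Γ.ends e).2 ∈ X)

lemma mem_ebFinset {X : Finset Γ.V} {e : Γ.E} :
    e ∈ Γ.ebFinset X ↔ Xor' ((Γ.ends e).1 ∈ X) ((Γ.ends e).2 ∈ X) := by
  simp only [ebFinset, Finset.mem_filter, mem_incEdges, and_iff_right_iff_imp]
  rintro (⟨h, -⟩ | ⟨h, -⟩) <;> tauto

lemma eb_eq_coe (X : Finset Γ.V) : Γ.Eb ↑X = ↑(Γ.ebFinset X) := by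
  ext e; simp [Eb, mem_ebFinset]

lemma eb_ncard (X : Finset Γ.V) : (Γ.Eb ↑X).ncard = (Γ.ebFinset X).card := by
  rw [eb_eq_coe, Set.ncard_coe_finset]

/-- Every vertex is incident to at least one edge. -/
lemma exists_edge (v : Γ.V) : ∃ e, (Γ.ends e).1 = v ∨ (Γ.ends e).2 = v := by
  have : Infinite Γ.V := Γ.infV
  obtain ⟨w, hw⟩ := exists_ne v
  obtain ⟨p⟩ := Γ.conn.preconnected v w
  cases p with
  | nil => exact absurd rfl hw.symm
  | cons h p' =>
    have h' := h
    rw [graphOf, SimpleGraph.fromRel_adj] at h'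
    obtain ⟨-, (⟨e, he⟩ | ⟨e, he⟩)⟩ := h'
    · exact ⟨e, Or.inl (by rw [he])⟩
    · exact ⟨e, Or.inr (by rw [he])⟩

lemma starF_nonempty (v : Γ.V) : (Γ.starF v).Nonempty := by
  obtain ⟨e, he⟩ := Γ.exists_edge v
  exact ⟨e, (Γ.mem_starF).2 he⟩

lemma mweight_pos (v : Γ.V) : 0 < Γ.mweight v :=
  Finset.sum_pos (fun e _ => Γ.len_pos e) (Γ.starF_nonempty v)

lemma sum_mweight_pos {X : Finset Γ.V} (hX : X.Nonempty) :
    0 < ∑ v ∈ X, Γ.mweight v :=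
  Finset.sum_pos (fun v _ => Γ.mweight_pos v) hX

lemma mem_vertsOf {F : Finset Γ.E} {v : Γ.V} :
    v ∈ Γ.vertsOf F ↔ ∃ e ∈ F, (Γ.ends e).1 = v ∨ (Γ.ends e).2 = v := by
  simp only [vertsOf, Finset.mem_union, Finset.mem_image]
  constructor
  · rintro (⟨e, he, h⟩ | ⟨e, he, h⟩)
    exacts [⟨e, he, Or.inl h⟩, ⟨e, he, Or.inr h⟩]
  · rintro ⟨e, he, (h | h)⟩
    exacts [Or.inl ⟨e, he, h⟩, Or.inr ⟨e, he, h⟩]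

/-- L1: `m(X) ≤ 2 mes(Y)` where `Y` is the set of edges incident to `X`. -/
lemma sum_mweight_le_two_mes (X : Finset Γ.V) :
    ∑ v ∈ X, Γ.mweight v ≤ 2 * Γ.mes (Γ.incEdges X) := by
  have key : ∀ v ∈ X, Γ.mweight v =
      ∑ e ∈ Γ.incEdges X, if e ∈ Γ.starF v then Γ.len e else 0 := by
    intro v hv
    have hfe : Γ.starF v = (Γ.incEdges X).filter (fun e => e ∈ Γ.starF v) := by
      ext e
      simp only [Finset.mem_filter]
      refine ⟨fun h => ⟨?_, h⟩, fun h => h.2⟩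
      rw [mem_incEdges]
      rcases (Γ.mem_starF).1 h with h' | h'
      · exact Or.inl (by rw [h']; exact hv)
      · exact Or.inr (by rw [h']; exact hv)
    rw [← Finset.sum_filter, ← hfe]
    rfl
  calc ∑ v ∈ X, Γ.mweight v
      = ∑ v ∈ X, ∑ e ∈ Γ.incEdges X, if e ∈ Γ.starF v then Γ.len e else 0 :=
        Finset.sum_congr rfl key
    _ = ∑ e ∈ Γ.incEdges X, ∑ v ∈ X, if e ∈ Γ.starF v then Γ.len e else 0 :=
        Finset.sum_comm
    _ ≤ ∑ e ∈ Γ.incEdges X, 2 * Γ.len e := by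
        refine Finset.sum_le_sum fun e _ => ?_
        rw [← Finset.sum_filter]
        have hsub : X.filter (fun v => e ∈ Γ.starF v) ⊆ {(Γ.ends e).1, (Γ.ends e).2} := by
          intro v hv
          rw [Finset.mem_filter, mem_starF] at hv
          rcases hv.2 with h | h <;> simp [← h]
        have hcard : (X.filter (fun v => e ∈ Γ.starF v)).card ≤ 2 := by
          refine (Finset.card_le_card hsub).trans ?_
          exact (Finset.card_insert_le _ _).trans (by simp)
        rw [Finset.sum_const, nsmul_eq_mul]
        exact mul_le_mul_of_nonneg_right (by exact_mod_cast hcard) (Γ.len_pos e).le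
    _ = 2 * Γ.mes (Γ.incEdges X) := by rw [mes, Finset.mul_sum]

/-- `degIn` at a vertex of `X` equals the full degree for the incidence subgraph. -/
lemma degIn_incEdges_of_mem {X : Finset Γ.V} {v : Γ.V} (hv : v ∈ X) :
    Γ.degIn (Γ.incEdges X) v = Γ.degree v := by
  have hfe : (Γ.incEdges X).filter (fun e => (Γ.ends e).1 = v ∨ (Γ.ends e).2 = v)
      = Γ.starF v := by
    ext e
    rw [Finset.mem_filter, mem_incEdges, mem_starF]
    constructor
    · exact fun h => h.2
    · rintro (h | h)
      · exact ⟨Or.inl (by rw [h]; exact hv), Or.inl h⟩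
      · exact ⟨Or.inr (by rw [h]; exact hv), Or.inr h⟩
  rw [degIn, hfe, starF, degree]

/-- L2: the boundary degree of the incidence subgraph is at most `#E_b(X)`. -/
lemma degBdry_incEdges_le (X : Finset Γ.V) :
    Γ.degBdry (Γ.incEdges X) ≤ ((Γ.ebFinset X).card : ℝ) := by
  classical
  set F := Γ.incEdges X with hF
  set B := Γ.bdry F with hB
  have hBX : ∀ v ∈ B, v ∉ X := by
    intro v hv hvX
    rw [hB, bdry, Finset.mem_filter] at hv
    rw [hF] at hv
    exact absurd (Γ.degIn_incEdges_of_mem hvX) (Nat.ne_of_lt hv.2)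
  have hsub : ∀ v ∈ B, (F.filter fun e => (Γ.ends e).1 = v ∨ (Γ.ends e).2 = v)
      ⊆ Γ.ebFinset X := by
    intro v hv e he
    rw [Finset.mem_filter] at he
    obtain ⟨heF, hinc⟩ := he
    have hX' := (Γ.mem_incEdges).1 (hF ▸ heF)
    rw [mem_ebFinset]
    have hvX := hBX v hv
    rcases hinc with h | h
    · have hp : (Γ.ends e).1 ∉ X := by rw [h]; exact hvX
      have hq : (Γ.ends e).2 ∈ X := hX'.resolve_left hp
      exact Or.inr ⟨hq, hp⟩
    · have hq : (Γ.ends e).2 ∉ X := by rw [h]; exact hvX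
      have hp : (Γ.ends e).1 ∈ X := hX'.resolve_right hq
      exact Or.inl ⟨hp, hq⟩
  have hdisj : ∀ u ∈ B, ∀ w ∈ B, u ≠ w →
      Disjoint (F.filter fun e => (Γ.ends e).1 = u ∨ (Γ.ends e).2 = u)
        (F.filter fun e => (Γ.ends e).1 = w ∨ (Γ.ends e).2 = w) := by
    intro u hu w hw huw
    rw [Finset.disjoint_left]
    intro e he he'
    rw [Finset.mem_filter] at he he'
    have hX' := (Γ.mem_incEdges).1 (hF ▸ he.1)
    have hu' := hBX u hu
    have hw' := hBX w hw
    rcases he.2 with h1 | h1 <;> rcases he'.2 with h2 | h2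
    · exact huw (h1.symm.trans h2)
    · rcases hX' with h | h
      · exact hu' (h1 ▸ h)
      · exact hw' (h2 ▸ h)
    · rcases hX' with h | h
      · exact hw' (h2 ▸ h)
      · exact hu' (h1 ▸ h)
    · exact huw (h1.symm.trans h2)
  have hnat : ∑ v ∈ B, Γ.degIn F v ≤ (Γ.ebFinset X).card := by
    rw [show ∑ v ∈ B, Γ.degIn F v =
        ∑ v ∈ B, (F.filter fun e => (Γ.ends e).1 = v ∨ (Γ.ends e).2 = v).card from rfl]
    rw [← Finset.card_biUnion hdisj]
    apply Finset.card_le_card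
    intro e he
    rw [Finset.mem_biUnion] at he
    obtain ⟨v, hv, hev⟩ := he
    exact hsub v hv hev
  calc Γ.degBdry F = ((∑ v ∈ B, Γ.degIn F v : ℕ) : ℝ) := by
        rw [degBdry]; push_cast; rfl
    _ ≤ _ := by exact_mod_cast hnat

/-- Auxiliary adjacency relation within a vertex set. -/
def Rrel (X : Finset Γ.V) (a b : Γ.V) : Prop :=
  a ∈ X ∧ b ∈ X ∧ ∃ e, Γ.ends e = (a, b) ∨ Γ.ends e = (b, a)

lemma rrel_symm (X : Finset Γ.V) : Symmetric (Γ.Rrel X) := by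
  rintro a b ⟨ha, hb, e, he⟩
  exact ⟨hb, ha, e, he.symm⟩

/-- Propositional splitting of a Xor across a disjoint decomposition. -/
lemma xor_split {p q p1 p2 q1 q2 : Prop}
    (f1 : p ↔ p1 ∨ p2) (f2 : q ↔ q1 ∨ q2) (f3 : ¬(p1 ∧ p2)) (f4 : ¬(q1 ∧ q2))
    (f5 : ¬(p1 ∧ q2)) (f6 : ¬(p2 ∧ q1)) :
    (Xor' p q ↔ Xor' p1 q1 ∨ Xor' p2 q2) ∧ ¬(Xor' p1 q1 ∧ Xor' p2 q2) := by
  classical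
  unfold Xor'
  by_cases h1 : p1 <;> by_cases h2 : p2 <;> by_cases h3 : q1 <;> by_cases h4 : q2 <;>
    simp_all

/-- Mediant inequality. -/
lemma mediant {a₁ a₂ b₁ b₂ : ℝ} (h₁ : 0 < b₁) (h₂ : 0 < b₂) :
    a₁ / b₁ ≤ (a₁ + a₂) / (b₁ + b₂) ∨ a₂ / b₂ ≤ (a₁ + a₂) / (b₁ + b₂) := by
  by_contra h
  push_neg at h
  obtain ⟨u, w⟩ := h
  rw [div_lt_div_iff₀ (by linarith) h₁] at u
  rw [div_lt_div_iff₀ (by linarith) h₂] at w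
  nlinarith

/-- L4: extraction of a connected vertex subset with no larger isoperimetric ratio. -/
lemma exists_connected_subset :
    ∀ n (X : Finset Γ.V), X.card ≤ n → X.Nonempty →
    ∃ X' : Finset Γ.V, X' ⊆ X ∧ X'.Nonempty ∧
      (∀ u ∈ X', ∀ w ∈ X', Relation.ReflTransGen (Γ.Rrel X') u w) ∧
      ((Γ.ebFinset X').card : ℝ) / ∑ v ∈ X', Γ.mweight v ≤
        ((Γ.ebFinset X).card : ℝ) / ∑ v ∈ X, Γ.mweight v := by
  intro n
  induction n with
  | zero => intro X hc hne; exact absurd (Finset.card_pos.2 hne) (by omega)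
  | succ n ih =>
    intro X hc hne
    obtain ⟨v, hv⟩ := hne
    set X₁ := X.filter (fun w => Relation.ReflTransGen (Γ.Rrel X) v w) with hX₁def
    have hvX₁ : v ∈ X₁ := by
      rw [hX₁def, Finset.mem_filter]; exact ⟨hv, Relation.ReflTransGen.refl⟩
    have hX₁sub : X₁ ⊆ X := Finset.filter_subset _ _
    -- closure of X₁ under adjacency within X
    have hclosed : ∀ a ∈ X₁, ∀ b ∈ X,
        (∃ e, Γ.ends e = (a, b) ∨ Γ.ends e = (b, a)) → b ∈ X₁ := by
      intro a ha b hb he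
      rw [hX₁def, Finset.mem_filter] at ha ⊢
      exact ⟨hb, ha.2.tail ⟨ha.1, hb, he⟩⟩
    by_cases hXeq : X₁ = X
    · refine ⟨X, subset_rfl, ⟨v, hv⟩, ?_, le_rfl⟩
      intro u hu w hw
      have hu' : Relation.ReflTransGen (Γ.Rrel X) v u := by
        have h2 : u ∈ X₁ := by rw [hXeq]; exact hu
        rw [hX₁def, Finset.mem_filter] at h2; exact h2.2
      have hw' : Relation.ReflTransGen (Γ.Rrel X) v w := by
        have h2 : w ∈ X₁ := by rw [hXeq]; exact hw
        rw [hX₁def, Finset.mem_filter] at h2; exact h2.2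
      exact ((@Relation.ReflTransGen.symmetric _ _ ⟨fun a b h => Γ.rrel_symm X h⟩).symm _ _ hu').trans hw'
    · set X₂ := X \ X₁ with hX₂def
      have hX₂sub : X₂ ⊆ X := Finset.sdiff_subset
      have hX₂ne : X₂.Nonempty := by
        rw [hX₂def]
        rcases Finset.sdiff_nonempty.mpr (fun h => hXeq (subset_antisymm hX₁sub h)) with h
        exact h
      have hdisj : Disjoint X₁ X₂ := Finset.disjoint_sdiff
      have hunion : X₁ ∪ X₂ = X := Finset.union_sdiff_of_subset hX₁sub
      -- pure propositional facts about an edge's endpoints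
      have hfacts : ∀ e : Γ.E,
          ((Γ.ends e).1 ∈ X ↔ (Γ.ends e).1 ∈ X₁ ∨ (Γ.ends e).1 ∈ X₂) ∧
          ((Γ.ends e).2 ∈ X ↔ (Γ.ends e).2 ∈ X₁ ∨ (Γ.ends e).2 ∈ X₂) ∧
          ¬((Γ.ends e).1 ∈ X₁ ∧ (Γ.ends e).1 ∈ X₂) ∧
          ¬((Γ.ends e).2 ∈ X₁ ∧ (Γ.ends e).2 ∈ X₂) ∧
          ¬((Γ.ends e).1 ∈ X₁ ∧ (Γ.ends e).2 ∈ X₂) ∧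
          ¬((Γ.ends e).1 ∈ X₂ ∧ (Γ.ends e).2 ∈ X₁) := by
        intro e
        have hmem : ∀ w, w ∈ X ↔ w ∈ X₁ ∨ w ∈ X₂ := fun w => by
          rw [← hunion, Finset.mem_union]
        have hd : ∀ w, w ∈ X₁ → w ∈ X₂ → False := fun w h1 h2 =>
          Finset.disjoint_left.1 hdisj h1 h2
        have h12 : (Γ.ends e).1 ∈ X₁ → (Γ.ends e).2 ∈ X → (Γ.ends e).2 ∈ X₁ :=
          fun h1 h2 => hclosed _ h1 _ h2 ⟨e, Or.inl rfl⟩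
        have h21 : (Γ.ends e).2 ∈ X₁ → (Γ.ends e).1 ∈ X → (Γ.ends e).1 ∈ X₁ :=
          fun h1 h2 => hclosed _ h1 _ h2 ⟨e, Or.inr rfl⟩
        refine ⟨hmem _, hmem _, fun h => hd _ h.1 h.2, fun h => hd _ h.1 h.2,
          fun h => hd _ (h12 h.1 (hX₂sub h.2)) h.2,
          fun h => hd _ (h21 h.2 (hX₂sub h.1)) h.1⟩
      have hEb : Γ.ebFinset X = Γ.ebFinset X₁ ∪ Γ.ebFinset X₂ := by
        ext e
        obtain ⟨f1, f2, f3, f4, f5, f6⟩ := hfacts e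
        rw [Finset.mem_union, mem_ebFinset, mem_ebFinset, mem_ebFinset]
        exact (xor_split f1 f2 f3 f4 f5 f6).1
      have hEbdisj : Disjoint (Γ.ebFinset X₁) (Γ.ebFinset X₂) := by
        rw [Finset.disjoint_left]
        intro e h1 h2
        obtain ⟨f1, f2, f3, f4, f5, f6⟩ := hfacts e
        rw [mem_ebFinset] at h1 h2
        exact (xor_split f1 f2 f3 f4 f5 f6).2 ⟨h1, h2⟩
      -- sums split
      have hm : ∑ v ∈ X, Γ.mweight v = (∑ v ∈ X₁, Γ.mweight v) + ∑ v ∈ X₂, Γ.mweight v := by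
        rw [← hunion, Finset.sum_union hdisj]
      have hcard : (Γ.ebFinset X).card = (Γ.ebFinset X₁).card + (Γ.ebFinset X₂).card := by
        rw [hEb, Finset.card_union_of_disjoint hEbdisj]
      have hX₁ne : X₁.Nonempty := ⟨v, hvX₁⟩
      have hb₁ : 0 < ∑ v ∈ X₁, Γ.mweight v := Γ.sum_mweight_pos hX₁ne
      have hb₂ : 0 < ∑ v ∈ X₂, Γ.mweight v := Γ.sum_mweight_pos hX₂ne
      have hmed := mediant (a₁ := ((Γ.ebFinset X₁).card : ℝ))
        (a₂ := ((Γ.ebFinset X₂).card : ℝ)) hb₁ hb₂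
      have hrw : ((Γ.ebFinset X).card : ℝ) / ∑ v ∈ X, Γ.mweight v =
          (((Γ.ebFinset X₁).card : ℝ) + ((Γ.ebFinset X₂).card : ℝ)) /
            ((∑ v ∈ X₁, Γ.mweight v) + ∑ v ∈ X₂, Γ.mweight v) := by
        rw [hm, hcard]; push_cast; ring
      -- cardinalities decrease
      have hcard₁ : X₁.card ≤ n := by
        have h1 : X₁.card < X.card :=
          Finset.card_lt_card (Finset.ssubset_iff_subset_ne.2 ⟨hX₁sub, hXeq⟩)
        omega
      have hcard₂ : X₂.card ≤ n := by
        have h2 : X₂.card < X.card := Finset.card_lt_card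
          (Finset.ssubset_iff_subset_ne.2 ⟨hX₂sub, fun h => by
            have : v ∈ X₂ := h ▸ hv
            exact Finset.disjoint_left.1 hdisj hvX₁ this⟩)
        omega
      rcases hmed with hle | hle
      · obtain ⟨X', hs, hn', hconn', hr'⟩ := ih X₁ hcard₁ hX₁ne
        exact ⟨X', hs.trans hX₁sub, hn', hconn', hr'.trans (by rw [hrw]; exact hle)⟩
      · obtain ⟨X', hs, hn', hconn', hr'⟩ := ih X₂ hcard₂ hX₂ne
        exact ⟨X', hs.trans hX₂sub, hn', hconn', hr'.trans (by rw [hrw]; exact hle)⟩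

lemma mem_vertsOf_of_mem {X : Finset Γ.V} {v : Γ.V} (hv : v ∈ X) :
    v ∈ Γ.vertsOf (Γ.incEdges X) := by
  obtain ⟨e, he⟩ := Γ.exists_edge v
  refine (Γ.mem_vertsOf).2 ⟨e, ?_, he⟩
  rw [mem_incEdges]
  rcases he with h | h
  · exact Or.inl (by rw [h]; exact hv)
  · exact Or.inr (by rw [h]; exact hv)

/-- L3: the incidence subgraph of a connected vertex set is connected. -/
lemma subConn_incEdges (X : Finset Γ.V)
    (hc : ∀ u ∈ X, ∀ w ∈ X, Relation.ReflTransGen (Γ.Rrel X) u w) (hX : X.Nonempty) :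
    Γ.SubConn (Γ.incEdges X) := by
  classical
  set F := Γ.incEdges X with hF
  set H := ((SimpleGraph.fromRel fun u v => ∃ e ∈ F, Γ.ends e = (u, v)).induce
    (↑(Γ.vertsOf F) : Set Γ.V)) with hH
  have hadj : ∀ (a b : Γ.V) (ha : a ∈ Γ.vertsOf F) (hb : b ∈ Γ.vertsOf F)
      (e : Γ.E), e ∈ F → (Γ.ends e = (a, b) ∨ Γ.ends e = (b, a)) →
      H.Adj ⟨a, ha⟩ ⟨b, hb⟩ := by
    intro a b ha hb e heF he
    show (SimpleGraph.fromRel fun u v => ∃ e ∈ F, Γ.ends e = (u, v)).Adj a b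
    rw [SimpleGraph.fromRel_adj]
    have hne : a ≠ b := by
      have hl := Γ.no_loops e
      rcases he with h | h <;> rw [h] at hl
      · exact hl
      · exact fun hab => hl hab.symm
    refine ⟨hne, ?_⟩
    rcases he with h | h
    · exact Or.inl ⟨e, heF, h⟩
    · exact Or.inr ⟨e, heF, h⟩
  have hreach : ∀ u w, Relation.ReflTransGen (Γ.Rrel X) u w →
      ∀ (hu : u ∈ Γ.vertsOf F) (hw : w ∈ Γ.vertsOf F),
        H.Reachable ⟨u, hu⟩ ⟨w, hw⟩ := by
    intro u w h
    induction h with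
    | refl => intro hu hw; rfl
    | tail h1 h2 ih =>
      intro hu hw
      obtain ⟨hbX, hcX, e, he⟩ := h2
      have hb : _ ∈ Γ.vertsOf F := hF ▸ Γ.mem_vertsOf_of_mem hbX
      have heF : e ∈ F := by
        rw [hF, mem_incEdges]
        rcases he with h | h
        · exact Or.inl (by rw [h]; exact hbX)
        · exact Or.inl (by rw [h]; exact hcX)
      exact (ih hu hb).trans (hadj _ _ hb hw e heF he).reachable
  have hvX : ∀ v ∈ X, v ∈ Γ.vertsOf F := fun v hv => hF ▸ Γ.mem_vertsOf_of_mem hv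
  have htoX : ∀ (a : Γ.V) (ha : a ∈ Γ.vertsOf F), ∃ (x : Γ.V) (hx : x ∈ X),
      H.Reachable ⟨a, ha⟩ ⟨x, hvX x hx⟩ := by
    intro a ha
    by_cases haX : a ∈ X
    · exact ⟨a, haX, by rfl⟩
    · obtain ⟨e, heF, hinc⟩ := (Γ.mem_vertsOf).1 ha
      have hX' : (Γ.ends e).1 ∈ X ∨ (Γ.ends e).2 ∈ X := (Γ.mem_incEdges).1 (hF ▸ heF)
      rcases hinc with h | h
      · have h2 : (Γ.ends e).2 ∈ X := by
          rcases hX' with h' | h'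
          · exact absurd (h ▸ h') haX
          · exact h'
        refine ⟨(Γ.ends e).2, h2, (hadj a _ ha (hvX _ h2) e heF (Or.inl ?_)).reachable⟩
        rw [← h]
      · have h2 : (Γ.ends e).1 ∈ X := by
          rcases hX' with h' | h'
          · exact h'
          · exact absurd (h ▸ h') haX
        refine ⟨(Γ.ends e).1, h2, (hadj a _ ha (hvX _ h2) e heF (Or.inr ?_)).reachable⟩
        rw [← h]
  rw [SubConn, SimpleGraph.connected_iff]
  constructor
  · rintro ⟨a, ha⟩ ⟨b, hb⟩
    obtain ⟨xa, hxa, hra⟩ := htoX a ha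
    obtain ⟨xb, hxb, hrb⟩ := htoX b hb
    exact hra.trans ((hreach xa xb (hc _ hxa _ hxb) _ _).trans hrb.symm)
  · obtain ⟨v, hv⟩ := hX
    exact ⟨⟨v, hvX v hv⟩⟩

/-- The incidence subgraph of a nonempty vertex set is nonempty. -/
lemma incEdges_nonempty {X : Finset Γ.V} (hX : X.Nonempty) :
    (Γ.incEdges X).Nonempty := by
  obtain ⟨v, hv⟩ := hX
  obtain ⟨e, he⟩ := Γ.exists_edge v
  refine ⟨e, (Γ.mem_incEdges).2 ?_⟩
  rcases he with h | h
  · exact Or.inl (by rw [h]; exact hv)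
  · exact Or.inr (by rw [h]; exact hv)

end MetricGraph

end Aux

/-- **Lemma 4.1 (first essential inequality).** `α_ess(G) ≤ 2·α_d^ess(V)`,
as an inequality in `[0,∞]`. -/
theorem alphaEss_le_two_mul_alphaDEss (Γ : MetricGraph) :
    Γ.alphaEssEnn ≤ 2 * Γ.alphaDEssEnn := by
  classical
  rw [MetricGraph.alphaEssEnn]
  apply iSup_le
  intro W
  have key : (⨅ (F : Finset Γ.E) (_ : Γ.IsFinSubgraph F ∧ Disjoint F W),
      ENNReal.ofReal (Γ.degBdry F / Γ.mes F)) ≤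
      2 * ENNReal.ofReal (Γ.alphaD (↑(Γ.vertsOf W) : Set Γ.V)ᶜ) := by
    set T := {r : ℝ | ∃ X : Finset Γ.V, ↑X ⊆ (↑(Γ.vertsOf W) : Set Γ.V)ᶜ ∧ X.Nonempty ∧
      r = ((Γ.Eb ↑X).ncard : ℝ) / ∑ v ∈ X, Γ.mweight v} with hT
    have hαT : Γ.alphaD (↑(Γ.vertsOf W) : Set Γ.V)ᶜ = sInf T := rfl
    set α := Γ.alphaD (↑(Γ.vertsOf W) : Set Γ.V)ᶜ with hα
    have hTne : T.Nonempty := by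
      have : Infinite Γ.V := Γ.infV
      obtain ⟨v, hv⟩ := Infinite.exists_notMem_finset (Γ.vertsOf W)
      refine ⟨_, {v}, ?_, ⟨v, Finset.mem_singleton_self v⟩, rfl⟩
      intro x hx
      rw [Finset.coe_singleton, Set.mem_singleton_iff] at hx
      subst hx
      simpa using hv
    apply ENNReal.le_of_forall_pos_le_add
    intro ε hε _
    have hδ : 0 < (ε : ℝ) / 2 := by positivity
    obtain ⟨r, hrT, hrlt⟩ := Real.lt_sInf_add_pos hTne hδ
    rw [hT] at hrT
    obtain ⟨X, hXsub, hXne, hreq⟩ := hrT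
    rw [← hαT] at hrlt
    obtain ⟨X', hX'sub, hX'ne, hX'conn, hX'rat⟩ :=
      Γ.exists_connected_subset X.card X le_rfl hXne
    have hrat : ((Γ.ebFinset X').card : ℝ) / ∑ v ∈ X', Γ.mweight v < α + (ε : ℝ) / 2 := by
      refine lt_of_le_of_lt (hX'rat.trans_eq ?_) hrlt
      rw [hreq, Γ.eb_ncard]
    set Y := Γ.incEdges X' with hY
    have hYfin : Γ.IsFinSubgraph Y :=
      ⟨Γ.incEdges_nonempty hX'ne, Γ.subConn_incEdges X' hX'conn hX'ne⟩
    have hYdisj : Disjoint Y W := by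
      rw [Finset.disjoint_left]
      intro e heY heW
      rcases (Γ.mem_incEdges).1 heY with h | h
      · exact hXsub (hX'sub h) ((Γ.mem_vertsOf).2 ⟨e, heW, Or.inl rfl⟩)
      · exact hXsub (hX'sub h) ((Γ.mem_vertsOf).2 ⟨e, heW, Or.inr rfl⟩)
    have hm0 : 0 < ∑ v ∈ X', Γ.mweight v := Γ.sum_mweight_pos hX'ne
    have hmes : (∑ v ∈ X', Γ.mweight v) / 2 ≤ Γ.mes Y := by
      have := Γ.sum_mweight_le_two_mes X'
      linarith
    have hratio : Γ.degBdry Y / Γ.mes Y ≤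
        2 * (((Γ.ebFinset X').card : ℝ) / ∑ v ∈ X', Γ.mweight v) := by
      have h1 : Γ.degBdry Y / Γ.mes Y ≤
          ((Γ.ebFinset X').card : ℝ) / ((∑ v ∈ X', Γ.mweight v) / 2) :=
        div_le_div₀ (Nat.cast_nonneg _) (Γ.degBdry_incEdges_le X') (by linarith) hmes
      calc Γ.degBdry Y / Γ.mes Y
          ≤ ((Γ.ebFinset X').card : ℝ) / ((∑ v ∈ X', Γ.mweight v) / 2) := h1
        _ = 2 * (((Γ.ebFinset X').card : ℝ) / ∑ v ∈ X', Γ.mweight v) := by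
            rw [div_div_eq_mul_div]; ring
    have hfinal : Γ.degBdry Y / Γ.mes Y ≤ 2 * α + (ε : ℝ) := by
      calc Γ.degBdry Y / Γ.mes Y
          ≤ 2 * (((Γ.ebFinset X').card : ℝ) / ∑ v ∈ X', Γ.mweight v) := hratio
        _ ≤ 2 * (α + (ε : ℝ) / 2) := by linarith
        _ = 2 * α + (ε : ℝ) := by ring
    calc (⨅ (F : Finset Γ.E) (_ : Γ.IsFinSubgraph F ∧ Disjoint F W),
        ENNReal.ofReal (Γ.degBdry F / Γ.mes F))
        ≤ ENNReal.ofReal (Γ.degBdry Y / Γ.mes Y) := iInf₂_le Y ⟨hYfin, hYdisj⟩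
      _ ≤ ENNReal.ofReal (2 * α + (ε : ℝ)) := ENNReal.ofReal_le_ofReal hfinal
      _ ≤ ENNReal.ofReal (2 * α) + ENNReal.ofReal (ε : ℝ) := ENNReal.ofReal_add_le
      _ = 2 * ENNReal.ofReal α + (ε : ℝ≥0∞) := by
          rw [ENNReal.ofReal_mul (by norm_num : (0:ℝ) ≤ 2), ENNReal.ofReal_ofNat,
            ENNReal.ofReal_coe_nnreal]
  refine key.trans ?_
  rw [MetricGraph.alphaDEssEnn]
  exact mul_le_mul_right
    (le_iSup (fun X : Finset Γ.V => ENNReal.ofReal (Γ.alphaD (↑X : Set Γ.V)ᶜ)) (Γ.vertsOf W)) 2
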